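/- For nonnegative integer n and parameters α, β > -1, the Jacobi polynomial P_n^{(α,β)} satisfies the differential equation (1-x²)·y'' + [β - α - (α+β+2)·x]·y' = -n(n+α+β+1)·y, where y = P_n^{(α,β)}. -/

import Mathlib

noncomputable section
open Real Finset MeasureTheory

/-- The Jacobi polynomial `P_n^{(α,β)}`, via its explicit representation. -/
def jacobiP (α β : ℝ) (n : ℕ) (x : ℝ) : ℝ :=
  Real.Gamma (α + n + 1) / (n.factorial * Real.Gamma (α + β + n + 1)) *
    ∑ s ∈ Finset.range (n + 1),
      (n.choose s : ℝ) * (Real.Gamma (α + β + n + s + 1) / Real.Gamma (α + s + 1)) *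
        ((x - 1) / 2) ^ s

lemma jacobiP_hasDerivAt (α β : ℝ) (n : ℕ) (x : ℝ) :
    HasDerivAt (jacobiP α β n)
      (Real.Gamma (α + n + 1) / (n.factorial * Real.Gamma (α + β + n + 1)) *
        ∑ s ∈ Finset.range (n + 1),
          (n.choose s : ℝ) * (Real.Gamma (α + β + n + s + 1) / Real.Gamma (α + s + 1)) *
            ((s : ℝ) * ((x - 1) / 2) ^ (s - 1) * (1 / 2))) x := by
  unfold jacobiP
  refine HasDerivAt.const_mul _ (HasDerivAt.fun_sum fun s _ => ?_)
  exact ((((hasDerivAt_id x).sub_const 1).div_const 2).pow s).const_mul _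

lemma jacobiP_deriv (α β : ℝ) (n : ℕ) :
    deriv (jacobiP α β n) = fun x =>
      Real.Gamma (α + n + 1) / (n.factorial * Real.Gamma (α + β + n + 1)) *
        ∑ s ∈ Finset.range (n + 1),
          (n.choose s : ℝ) * (Real.Gamma (α + β + n + s + 1) / Real.Gamma (α + s + 1)) *
            ((s : ℝ) * ((x - 1) / 2) ^ (s - 1) * (1 / 2)) :=
  funext fun x => (jacobiP_hasDerivAt α β n x).deriv

lemma jacobiP_hasDerivAt2 (α β : ℝ) (n : ℕ) (x : ℝ) :
    HasDerivAt (deriv (jacobiP α β n))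
      (Real.Gamma (α + n + 1) / (n.factorial * Real.Gamma (α + β + n + 1)) *
        ∑ s ∈ Finset.range (n + 1),
          (n.choose s : ℝ) * (Real.Gamma (α + β + n + s + 1) / Real.Gamma (α + s + 1)) *
            ((s : ℝ) * (((s - 1 : ℕ) : ℝ) * ((x - 1) / 2) ^ (s - 1 - 1) * (1 / 2)) * (1 / 2))) x := by
  rw [jacobiP_deriv]
  refine HasDerivAt.const_mul _ (HasDerivAt.fun_sum fun s _ => ?_)
  have h : HasDerivAt (fun x : ℝ => (s : ℝ) * ((x - 1) / 2) ^ (s - 1) * (1 / 2))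
      ((s : ℝ) * (((s - 1 : ℕ) : ℝ) * ((x - 1) / 2) ^ (s - 1 - 1) * (1 / 2)) * (1 / 2)) x :=
    (((((hasDerivAt_id x).sub_const 1).div_const 2).pow (s - 1)).const_mul _).mul_const _
  exact h.const_mul _

lemma gammaKey (α β : ℝ) (hα : -1 < α) (hβ : -1 < β) (n s : ℕ) (hs : s < n) :
    (n.choose s : ℝ) * (Real.Gamma (α + β + n + s + 1) / Real.Gamma (α + s + 1)) *
        ((n : ℝ) * (n + α + β + 1) - s * (s + α + β + 1))
      = (n.choose (s + 1) : ℝ) *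
          (Real.Gamma (α + β + n + (s + 1 : ℕ) + 1) / Real.Gamma (α + (s + 1 : ℕ) + 1)) *
          ((s + 1 : ℝ) * ((s : ℝ) + 1 + α)) := by
  have hn1 : (1 : ℝ) ≤ n := by
    have : 1 ≤ n := by omega
    exact_mod_cast this
  have hs0 : (0 : ℝ) ≤ s := Nat.cast_nonneg s
  have h1 : (0 : ℝ) < α + s + 1 := by linarith
  have h2 : (0 : ℝ) < α + β + n + s + 1 := by linarith
  have e1 : α + β + (n : ℝ) + ((s + 1 : ℕ) : ℝ) + 1 = (α + β + n + s + 1) + 1 := by push_cast; ring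
  have e2 : α + ((s + 1 : ℕ) : ℝ) + 1 = (α + s + 1) + 1 := by push_cast; ring
  rw [e1, e2, Real.Gamma_add_one h2.ne', Real.Gamma_add_one h1.ne']
  have hc' : (n.choose (s + 1) : ℝ) * (s + 1) = (n.choose s : ℝ) * ((n : ℝ) - s) := by
    have := congrArg (Nat.cast (R := ℝ)) (Nat.choose_succ_right_eq n s)
    push_cast [Nat.cast_sub hs.le] at this
    exact this
  set G := Real.Gamma (α + β + n + s + 1) with hG
  set g := Real.Gamma (α + s + 1) with hg
  have g1 : g ≠ 0 := (Real.Gamma_pos_of_pos h1).ne'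
  field_simp
  linear_combination (-(α + β + (n : ℝ) + s + 1) * (α + (s : ℝ) + 1) * G) * hc'

-- per-term split lemma
lemma termSplit (α β : ℝ) (n : ℕ) (u : ℝ) (c : ℝ) (s : ℕ) :
    (1 - (2 * u + 1) ^ 2) *
        (c * ((s : ℝ) * (((s - 1 : ℕ) : ℝ) * u ^ (s - 1 - 1) * (1 / 2)) * (1 / 2)))
      + (β - α - (α + β + 2) * (2 * u + 1)) * (c * ((s : ℝ) * u ^ (s - 1) * (1 / 2)))
      + (n : ℝ) * ((n : ℝ) + α + β + 1) * (c * u ^ s)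
    = c * (((n : ℝ) * ((n : ℝ) + α + β + 1) - (s : ℝ) * ((s : ℝ) + α + β + 1)) * u ^ s)
      - c * ((s : ℝ) * ((s : ℝ) + α) * u ^ (s - 1)) := by
  match s with
  | 0 => push_cast; ring
  | 1 => push_cast; ring
  | (m + 2) =>
    rw [show m + 2 - 1 - 1 = m from rfl, show m + 2 - 1 = m + 1 from rfl]
    push_cast
    ring

lemma sumKey (α β : ℝ) (hα : -1 < α) (hβ : -1 < β) (n : ℕ) (u : ℝ) :
    (1 - (2 * u + 1) ^ 2) *
        ∑ s ∈ Finset.range (n + 1),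
          (n.choose s : ℝ) * (Real.Gamma (α + β + n + s + 1) / Real.Gamma (α + s + 1)) *
            ((s : ℝ) * (((s - 1 : ℕ) : ℝ) * u ^ (s - 1 - 1) * (1 / 2)) * (1 / 2))
      + (β - α - (α + β + 2) * (2 * u + 1)) *
        ∑ s ∈ Finset.range (n + 1),
          (n.choose s : ℝ) * (Real.Gamma (α + β + n + s + 1) / Real.Gamma (α + s + 1)) *
            ((s : ℝ) * u ^ (s - 1) * (1 / 2))
      + (n : ℝ) * ((n : ℝ) + α + β + 1) *
        ∑ s ∈ Finset.range (n + 1),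
          (n.choose s : ℝ) * (Real.Gamma (α + β + n + s + 1) / Real.Gamma (α + s + 1)) *
            u ^ s
      = 0 := by
  set c : ℕ → ℝ := fun s =>
    (n.choose s : ℝ) * (Real.Gamma (α + β + n + s + 1) / Real.Gamma (α + s + 1)) with hc
  rw [Finset.mul_sum, Finset.mul_sum, Finset.mul_sum, ← Finset.sum_add_distrib,
    ← Finset.sum_add_distrib]
  rw [Finset.sum_congr rfl (fun s _ => termSplit α β n u (c s) s)]
  rw [Finset.sum_sub_distrib]
  rw [Finset.sum_range_succ
    (fun s => c s * (((n : ℝ) * ((n : ℝ) + α + β + 1) - (s : ℝ) * ((s : ℝ) + α + β + 1)) * u ^ s))]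
  rw [Finset.sum_range_succ' (fun s => c s * ((s : ℝ) * ((s : ℝ) + α) * u ^ (s - 1)))]
  have hcong : ∀ s ∈ Finset.range n,
      c s * (((n : ℝ) * ((n : ℝ) + α + β + 1) - (s : ℝ) * ((s : ℝ) + α + β + 1)) * u ^ s)
        = c (s + 1) * (((s + 1 : ℕ) : ℝ) * (((s + 1 : ℕ) : ℝ) + α) * u ^ (s + 1 - 1)) := by
    intro s hs
    have hk := gammaKey α β hα hβ n s (Finset.mem_range.mp hs)
    rw [show s + 1 - 1 = s from rfl, hc]
    push_cast at hk ⊢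
    linear_combination u ^ s * hk
  rw [Finset.sum_congr rfl hcong]
  simp

/-- The Jacobi differential equation
`(1-x²)y'' + [β-α-(α+β+2)x]y' = -n(n+α+β+1)y` for `y = P_n^{(α,β)}`. -/
theorem jacobi_differential_equation (n : ℕ) (α β : ℝ) (hα : -1 < α) (hβ : -1 < β) (x : ℝ) :
    (1 - x ^ 2) * deriv (deriv (jacobiP α β n)) x
        + (β - α - (α + β + 2) * x) * deriv (jacobiP α β n) x
      = -(n * (n + α + β + 1)) * jacobiP α β n x := by
  rw [(jacobiP_hasDerivAt2 α β n x).deriv, (jacobiP_hasDerivAt α β n x).deriv]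
  simp only [jacobiP]
  have hx : 2 * ((x - 1) / 2) + 1 = x := by ring
  have key := sumKey α β hα hβ n ((x - 1) / 2)
  rw [hx] at key
  linear_combination
    (Real.Gamma (α + n + 1) / (n.factorial * Real.Gamma (α + β + n + 1))) * key
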